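/- arXiv:2006.06551 — 3 statements merged into one kernel-verified Lean document; each statement's English description precedes it below -/
import Mathlib

section
/- Let G be a finite connected simple graph and let D ⊆ V(G) be a set of vertices such that the induced subgraph G[D] is connected and every vertex in V(G) \ D has at least two neighbors in D. Then the rainbow connection number of G is at most |D| + 1. -/
open SimpleGraph

/-- A coloring `c` of the (potential) edges of `G` makes `G` rainbow-connected if every pair of
vertices is joined by a path whose edges all receive pairwise distinct colors. -/
def IsRainbowConnected {V : Type*} {n : ℕ} (G : SimpleGraph V) (c : Sym2 V → Fin n) : Prop :=
  ∀ u v : V, ∃ p : G.Walk u v, p.IsPath ∧ (p.edges.map c).Nodup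

section Helpers

variable {V : Type*}

private lemma walk_crossing {G : SimpleGraph V} {D : Set V} {S : Set V}
    {a b : D} (p : (G.induce D).Walk a b) (ha : (a : V) ∈ S) (hb : (b : V) ∉ S) :
    ∃ x ∈ S, ∃ y, y ∈ D ∧ y ∉ S ∧ G.Adj x y := by
  induction p with
  | nil => exact absurd ha hb
  | @cons α β γ h q ih =>
    by_cases hc : (β : V) ∈ S
    · exact ih hc hb
    · exact ⟨α, ha, β, β.2, hc, h⟩

private lemma isPath_concat {G : SimpleGraph V} {u v w : V} {p : G.Walk u v}
    (hp : p.IsPath) (h : G.Adj v w) (hw : w ∉ p.support) : (p.concat h).IsPath := by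
  rw [← SimpleGraph.Walk.isPath_reverse_iff, SimpleGraph.Walk.reverse_concat]
  exact hp.reverse.cons (by simpa [SimpleGraph.Walk.support_reverse] using hw)

private lemma tsupport_mem {T : SimpleGraph V} {D : Finset V}
    (hTD : ∀ x y, T.Adj x y → x ∈ D ∧ y ∈ D) {a b : V} (p : T.Walk a b) (ha : a ∈ D) :
    ∀ x ∈ p.support, x ∈ D := by
  induction p with
  | nil =>
    intro x hx
    rw [SimpleGraph.Walk.support_nil, List.mem_singleton] at hx
    exact hx ▸ ha
  | cons h q ih =>
    intro x hx
    rw [SimpleGraph.Walk.support_cons] at hx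
    rcases List.mem_cons.1 hx with rfl | hx
    · exact ha
    · exact ih (hTD _ _ h).2 x hx

private lemma exists_tree {G : SimpleGraph V} {D : Finset V} [DecidableEq V]
    (hDconn : (G.induce (↑D : Set V)).Connected) {root : V} (hroot : root ∈ D) :
    ∃ (par : V → V) (ord : V → ℕ),
      (∀ d ∈ D, d ≠ root → par d ∈ D ∧ G.Adj d (par d) ∧ ord (par d) < ord d) ∧
      Set.InjOn ord ↑D := by
  classical
  suffices h : ∀ n (S : Finset V) (par : V → V) (ord : V → ℕ),
      (D \ S).card = n → root ∈ S → S ⊆ D →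
      (∀ d ∈ S, d ≠ root → par d ∈ S ∧ G.Adj d (par d) ∧ ord (par d) < ord d) →
      Set.InjOn ord ↑S →
      ∃ (par : V → V) (ord : V → ℕ),
        (∀ d ∈ D, d ≠ root → par d ∈ D ∧ G.Adj d (par d) ∧ ord (par d) < ord d) ∧
        Set.InjOn ord ↑D by
    refine h _ {root} id (fun _ => 0) rfl (Finset.mem_singleton_self root)
      (Finset.singleton_subset_iff.2 hroot)
      (fun d hd hdr => absurd (Finset.mem_singleton.1 hd) hdr) ?_
    intro x hx y hy _
    simp only [Finset.coe_singleton, Set.mem_singleton_iff] at hx hy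
    rw [hx, hy]
  intro n
  induction n with
  | zero =>
    intro S par ord hcard hrootS hS hgood hinj
    have hDS : D = S := by
      apply Finset.Subset.antisymm _ hS
      intro x hx
      by_contra hxS
      have : x ∈ D \ S := Finset.mem_sdiff.2 ⟨hx, hxS⟩
      rw [Finset.card_eq_zero] at hcard
      simp [hcard] at this
    exact ⟨par, ord, by rw [hDS]; exact hgood, by rw [hDS]; exact hinj⟩
  | succ n ih =>
    intro S par ord hcard hrootS hS hgood hinj
    have hne : (D \ S).Nonempty := Finset.card_pos.1 (by omega)
    obtain ⟨d₀, hd₀⟩ := hne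
    have hd₀D : d₀ ∈ D := (Finset.mem_sdiff.1 hd₀).1
    have hd₀S : d₀ ∉ S := (Finset.mem_sdiff.1 hd₀).2
    obtain ⟨w⟩ := hDconn.preconnected ⟨root, by simpa using hroot⟩ ⟨d₀, by simpa using hd₀D⟩
    obtain ⟨x, hxS, y, hyD, hyS, hxy⟩ :=
      walk_crossing (S := (↑S : Set V)) w (by simpa using hrootS) (by simpa using hd₀S)
    have hyD' : y ∈ D := by simpa using hyD
    have hyS' : y ∉ S := by simpa using hyS
    have hxS' : x ∈ S := by simpa using hxS
    have hxny : x ≠ y := fun h => hyS' (by rwa [h] at hxS')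
    refine ih (insert y S) (Function.update par y x) (Function.update ord y (S.sup ord + 1))
      ?_ (Finset.mem_insert_of_mem hrootS) (Finset.insert_subset hyD' hS) ?_ ?_
    · rw [Finset.sdiff_insert, Finset.card_erase_of_mem (Finset.mem_sdiff.2 ⟨hyD', hyS'⟩),
        hcard]
      omega
    · intro d hd hdr
      rcases Finset.mem_insert.1 hd with rfl | hdS
      · rw [Function.update_self, Function.update_of_ne hxny, Function.update_self]
        exact ⟨Finset.mem_insert_of_mem hxS', hxy.symm,
          Nat.lt_succ_of_le (Finset.le_sup hxS')⟩
      · have hdny : d ≠ y := fun h => hyS' (by rwa [h] at hdS)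
        obtain ⟨h1, h2, h3⟩ := hgood d hdS hdr
        have hpny : par d ≠ y := fun h => hyS' (by rwa [h] at h1)
        rw [Function.update_of_ne hdny, Function.update_of_ne hpny,
          Function.update_of_ne hdny]
        exact ⟨Finset.mem_insert_of_mem h1, h2, h3⟩
    · intro a ha b hb hab
      simp only [Finset.coe_insert, Set.mem_insert_iff, Finset.mem_coe] at ha hb
      have hub : ∀ z ∈ S, Function.update ord y (S.sup ord + 1) z = ord z :=
        fun z hz => Function.update_of_ne (fun h => hyS' (by rwa [h] at hz)) _ _
      rcases ha with rfl | ha <;> rcases hb with rfl | hb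
      · rfl
      · exfalso
        rw [Function.update_self, hub b hb] at hab
        have := Finset.le_sup (f := ord) hb
        omega
      · exfalso
        rw [Function.update_self, hub a ha] at hab
        have := Finset.le_sup (f := ord) ha
        omega
      · rw [hub a ha, hub b hb] at hab
        exact hinj (by simpa using ha) (by simpa using hb) hab

private lemma assemble {k : ℕ} (G : SimpleGraph V) (D : Finset V) (root : V)
    (hroot : root ∈ D)
    (T : SimpleGraph V) (hTG : ∀ e ∈ T.edgeSet, e ∈ G.edgeSet)
    (c : Sym2 V → Fin (k + 1)) (oc : V → Fin (k + 1))
    (hocinj : ∀ a ∈ D, ∀ b ∈ D, oc a = oc b → a = b)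
    (hoclast : ∀ d ∈ D, oc d ≠ Fin.last k)
    (hTD : ∀ x y, T.Adj x y → x ∈ D ∧ y ∈ D)
    (hTreach : ∀ d ∈ D, T.Reachable d root)
    (hTedge : ∀ e ∈ T.edgeSet, ∃ d ∈ D, d ≠ root ∧ c e = oc d)
    (hcinj : ∀ e ∈ T.edgeSet, ∀ e' ∈ T.edgeSet, c e = c e' → e = e')
    (f₁ f₂ : ∀ v : V, v ∉ D → V)
    (hf₁ : ∀ v hv, f₁ v hv ∈ D) (hf₂ : ∀ v hv, f₂ v hv ∈ D)
    (hadj₁ : ∀ v hv, G.Adj v (f₁ v hv)) (hadj₂ : ∀ v hv, G.Adj v (f₂ v hv))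
    (hc₁ : ∀ v hv, c s(v, f₁ v hv) = oc root)
    (hc₂ : ∀ v hv, c s(f₂ v hv, v) = Fin.last k) :
    IsRainbowConnected G c := by
  classical
  have key : ∀ a ∈ D, ∀ b ∈ D, ∃ q : G.Walk a b, q.IsPath ∧ (∀ x ∈ q.support, x ∈ D) ∧
      (q.edges.map c).Nodup ∧ (∀ x ∈ q.edges.map c, ∃ d ∈ D, d ≠ root ∧ x = oc d) := by
    intro a ha b hb
    obtain ⟨w⟩ := (hTreach a ha).trans (hTreach b hb).symm
    obtain ⟨p, hp⟩ : ∃ p : T.Walk a b, p.IsPath := ⟨w.toPath.1, w.toPath.2⟩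
    refine ⟨p.transfer G (fun e he => hTG e (p.edges_subset_edgeSet he)), hp.transfer _,
      ?_, ?_, ?_⟩
    · intro x hx
      rw [SimpleGraph.Walk.support_transfer] at hx
      exact tsupport_mem hTD p ha x hx
    · rw [SimpleGraph.Walk.edges_transfer]
      refine List.Nodup.map_on ?_ hp.edges_nodup
      intro e he e' he' hcc
      exact hcinj e (p.edges_subset_edgeSet he) e' (p.edges_subset_edgeSet he') hcc
    · rw [SimpleGraph.Walk.edges_transfer]
      intro x hx
      obtain ⟨e, he, rfl⟩ := List.mem_map.1 hx
      exact hTedge e (p.edges_subset_edgeSet he)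
  intro u v
  by_cases huv : u = v
  · subst huv
    exact ⟨SimpleGraph.Walk.nil, SimpleGraph.Walk.IsPath.nil, by simp⟩
  by_cases hu : u ∈ D <;> by_cases hv : v ∈ D
  · obtain ⟨q, hq, _, hnd, _⟩ := key u hu v hv
    exact ⟨q, hq, hnd⟩
  · -- u ∈ D, v ∉ D
    obtain ⟨q, hq, hsup, hnd, hcolors⟩ := key u hu (f₂ v hv) (hf₂ v hv)
    refine ⟨q.concat (hadj₂ v hv).symm, isPath_concat hq _ (fun h => hv (hsup v h)), ?_⟩
    simp only [SimpleGraph.Walk.edges_concat, List.concat_eq_append, List.map_append,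
      List.nodup_append]
    refine ⟨hnd, by simp, ?_⟩
    intro x hx y hy hx'
    simp only [List.map_cons, List.map_nil, List.mem_singleton] at hy
    subst hy
    obtain ⟨d, hd, hdr, rfl⟩ := hcolors x hx
    rw [hc₂ v hv] at hx'
    exact hoclast d hd hx'
  · -- u ∉ D, v ∈ D
    obtain ⟨q, hq, hsup, hnd, hcolors⟩ := key (f₁ u hu) (hf₁ u hu) v hv
    refine ⟨SimpleGraph.Walk.cons (hadj₁ u hu) q, hq.cons (fun h => hu (hsup u h)), ?_⟩
    rw [SimpleGraph.Walk.edges_cons, List.map_cons]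
    refine List.nodup_cons.2 ⟨?_, hnd⟩
    intro hmem
    obtain ⟨d, hd, hdr, heq⟩ := hcolors _ hmem
    rw [hc₁ u hu] at heq
    exact hdr (hocinj d hd root hroot heq.symm)
  · -- u ∉ D, v ∉ D
    obtain ⟨q, hq, hsup, hnd, hcolors⟩ := key (f₁ u hu) (hf₁ u hu) (f₂ v hv) (hf₂ v hv)
    have hvq : v ∉ q.support := fun h => hv (hsup v h)
    refine ⟨SimpleGraph.Walk.cons (hadj₁ u hu) (q.concat (hadj₂ v hv).symm),
      (isPath_concat hq _ hvq).cons ?_, ?_⟩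
    · rw [SimpleGraph.Walk.support_concat]
      intro h
      rcases List.mem_append.1 h with h | h
      · exact hu (hsup u h)
      · exact huv (List.mem_singleton.1 h)
    · simp only [SimpleGraph.Walk.edges_cons, SimpleGraph.Walk.edges_concat,
        List.concat_eq_append, List.map_cons, List.map_append]
      refine List.nodup_cons.2 ⟨?_, List.nodup_append.2 ⟨hnd, by simp, ?_⟩⟩
      · rw [hc₁ u hu]
        intro hmem
        rcases List.mem_append.1 hmem with h | h
        · obtain ⟨d, hd, hdr, heq⟩ := hcolors _ h
          exact hdr (hocinj d hd root hroot heq.symm)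
        · simp only [List.map_cons, List.map_nil, List.mem_singleton] at h
          rw [hc₂ v hv] at h
          exact hoclast root hroot h
      · intro x hx y hy hx'
        simp only [List.map_cons, List.map_nil, List.mem_singleton] at hy
        subst hy
        obtain ⟨d, hd, hdr, rfl⟩ := hcolors x hx
        rw [hc₂ v hv] at hx'
        exact hoclast d hd hx'

end Helpers

/-- If `D` induces a connected subgraph of the finite connected graph `G` and every vertex
outside `D` has at least two neighbors in `D`, then `rc(G) ≤ |D| + 1`: there is an edge
coloring with at most `|D| + 1` colors making `G` rainbow-connected. -/
theorem rc_le_card_dominating_add_one {V : Type*} [Fintype V] (G : SimpleGraph V)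
    (hG : G.Connected) (D : Finset V)
    (hDconn : (G.induce (↑D : Set V)).Connected)
    (hdom : ∀ v : V, v ∉ D →
      ∃ d₁ ∈ D, ∃ d₂ ∈ D, d₁ ≠ d₂ ∧ G.Adj v d₁ ∧ G.Adj v d₂) :
    ∃ c : Sym2 V → Fin (D.card + 1), IsRainbowConnected G c := by
  classical
  have hV : Nonempty V := hG.nonempty
  obtain ⟨root, hroot⟩ : ∃ r, r ∈ D := by
    by_contra h
    push_neg at h
    obtain ⟨v⟩ := hV
    obtain ⟨d₁, hd₁, -⟩ := hdom v (h v)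
    exact h d₁ hd₁
  obtain ⟨par, ordF, hgood, hinjF⟩ := exists_tree (G := G) hDconn hroot
  choose f₁ hf₁ f₂ hf₂ hne12 hadj₁ hadj₂ using hdom
  -- compress `ordF` to values `< D.card`
  obtain ⟨ord, hordlt, hordinj⟩ : ∃ ord : V → ℕ, (∀ d ∈ D, ord d < D.card) ∧
      Set.InjOn ord ↑D := by
    refine ⟨fun d => (D.filter (fun x => ordF x < ordF d)).card, ?_, ?_⟩
    · intro d hd
      have hsub : (D.filter fun x => ordF x < ordF d) ⊆ D.erase d := by
        intro x hx
        rw [Finset.mem_filter] at hx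
        exact Finset.mem_erase.2 ⟨fun h => absurd (h ▸ hx.2) (lt_irrefl _), hx.1⟩
      calc (D.filter fun x => ordF x < ordF d).card ≤ (D.erase d).card :=
            Finset.card_le_card hsub
        _ < D.card := Finset.card_erase_lt_of_mem hd
    · have hmono : ∀ a ∈ D, ∀ b ∈ D, ordF a < ordF b →
          (D.filter fun x => ordF x < ordF a).card < (D.filter fun x => ordF x < ordF b).card := by
        intro a ha b hb h
        apply Finset.card_lt_card
        refine Finset.ssubset_iff_of_subset ?_ |>.2 ?_
        · intro x hx
          rw [Finset.mem_filter] at hx ⊢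
          exact ⟨hx.1, hx.2.trans h⟩
        · exact ⟨a, Finset.mem_filter.2 ⟨ha, h⟩, fun hc =>
            absurd (Finset.mem_filter.1 hc).2 (lt_irrefl _)⟩
      intro a ha b hb hab
      rcases lt_trichotomy (ordF a) (ordF b) with h | h | h
      · exact absurd hab (Nat.ne_of_lt (hmono a ha b hb h))
      · exact hinjF ha hb h
      · exact absurd hab.symm (Nat.ne_of_lt (hmono b hb a ha h))
  obtain ⟨oc, hocval⟩ : ∃ oc : V → Fin (D.card + 1), ∀ d ∈ D, (oc d : ℕ) = ord d :=
    ⟨fun d => if h : d ∈ D then ⟨ord d, Nat.lt_succ_of_lt (hordlt d h)⟩ else ⟨0, Nat.succ_pos _⟩,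
      fun d hd => by simp [hd]⟩
  have hocinj : ∀ a ∈ D, ∀ b ∈ D, oc a = oc b → a = b := by
    intro a ha b hb h
    apply hordinj ha hb
    rw [← hocval a ha, ← hocval b hb, h]
  have hoclast : ∀ d ∈ D, oc d ≠ Fin.last D.card := by
    intro d hd h
    have := hocval d hd
    rw [h] at this
    simp only [Fin.val_last] at this
    exact absurd (hordlt d hd) (by omega)
  -- uniqueness of tree-edge representation
  have huniq : ∀ d, d ∈ D → d ≠ root → ∀ d', d' ∈ D → d' ≠ root →
      s(d, par d) = s(d', par d') → d = d' := by
    intro d hd hdr d' hd' hdr' h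
    rcases Sym2.eq_iff.1 h with ⟨h1, _⟩ | ⟨h1, h2⟩
    · exact h1
    · exfalso
      have o1 := (hgood d hd hdr).2.2
      have o2 := (hgood d' hd' hdr').2.2
      rw [h2] at o1
      rw [← h1] at o2
      omega
  -- the coloring
  obtain ⟨c, hc0, hc1, hc2⟩ : ∃ c : Sym2 V → Fin (D.card + 1),
      (∀ d ∈ D, d ≠ root → c s(d, par d) = oc d) ∧
      (∀ v hv, c s(v, f₁ v hv) = oc root) ∧
      (∀ v hv, c s(f₂ v hv, v) = Fin.last D.card) := by
    refine ⟨fun e =>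
      if h : ∃ d, d ∈ D ∧ d ≠ root ∧ s(d, par d) = e then oc h.choose
      else if ∃ v, ∃ hv : v ∉ D, s(v, f₁ v hv) = e then oc root
      else Fin.last D.card, ?_, ?_, ?_⟩
    · intro d hd hdr
      have hP : ∃ d', d' ∈ D ∧ d' ≠ root ∧ s(d', par d') = s(d, par d) := ⟨d, hd, hdr, rfl⟩
      beta_reduce
      rw [dif_pos hP]
      obtain ⟨h1, h2, h3⟩ := hP.choose_spec
      exact congrArg oc (huniq _ h1 h2 _ hd hdr h3)
    · intro v hv
      have hnP : ¬∃ d, d ∈ D ∧ d ≠ root ∧ s(d, par d) = s(v, f₁ v hv) := by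
        rintro ⟨d, hd, hdr, he⟩
        rcases Sym2.eq_iff.1 he with ⟨h1, _⟩ | ⟨_, h2⟩
        · exact hv (h1 ▸ hd)
        · exact hv (h2 ▸ (hgood d hd hdr).1)
      beta_reduce
      rw [dif_neg hnP, if_pos ⟨v, hv, rfl⟩]
    · intro v hv
      have hnP : ¬∃ d, d ∈ D ∧ d ≠ root ∧ s(d, par d) = s(f₂ v hv, v) := by
        rintro ⟨d, hd, hdr, he⟩
        rcases Sym2.eq_iff.1 he with ⟨_, h2⟩ | ⟨h1, _⟩
        · exact hv (h2 ▸ (hgood d hd hdr).1)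
        · exact hv (h1 ▸ hd)
      have hnP1 : ¬∃ w, ∃ hw : w ∉ D, s(w, f₁ w hw) = s(f₂ v hv, v) := by
        rintro ⟨w, hw, he⟩
        rcases Sym2.eq_iff.1 he with ⟨h1, _⟩ | ⟨h1, h2⟩
        · exact hw (h1 ▸ hf₂ v hv)
        · subst h1
          exact hne12 w hw (h2.trans rfl)
      beta_reduce
      rw [dif_neg hnP, if_neg hnP1]
  -- the tree graph
  set T : SimpleGraph V :=
    SimpleGraph.fromRel (fun x y => x ∈ D ∧ x ≠ root ∧ par x = y ∧ G.Adj x y) with hT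
  have hTrep : ∀ e ∈ T.edgeSet, ∃ d, d ∈ D ∧ d ≠ root ∧ e = s(d, par d) := by
    intro e he
    induction e with
    | h x y =>
      rw [SimpleGraph.mem_edgeSet, hT, SimpleGraph.fromRel_adj] at he
      rcases he.2 with ⟨h1, h2, h3, _⟩ | ⟨h1, h2, h3, _⟩
      · exact ⟨x, h1, h2, by rw [h3]⟩
      · exact ⟨y, h1, h2, by rw [h3, Sym2.eq_swap]⟩
  have hTG : ∀ e ∈ T.edgeSet, e ∈ G.edgeSet := by
    intro e he
    obtain ⟨d, hd, hdr, rfl⟩ := hTrep e he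
    exact (hgood d hd hdr).2.1
  have hTD : ∀ x y, T.Adj x y → x ∈ D ∧ y ∈ D := by
    intro x y hxy
    rw [hT, SimpleGraph.fromRel_adj] at hxy
    rcases hxy.2 with ⟨h1, h2, h3, _⟩ | ⟨h1, h2, h3, _⟩
    · exact ⟨h1, h3 ▸ (hgood x h1 h2).1⟩
    · exact ⟨h3 ▸ (hgood y h1 h2).1, h1⟩
  have hTreach : ∀ n, ∀ d ∈ D, ordF d ≤ n → T.Reachable d root := by
    intro n
    induction n with
    | zero =>
      intro d hd h0
      by_cases hdr : d = root
      · exact hdr ▸ SimpleGraph.Reachable.refl _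
      · exact absurd (hgood d hd hdr).2.2 (by omega)
    | succ n ih =>
      intro d hd hle
      by_cases hdr : d = root
      · exact hdr ▸ SimpleGraph.Reachable.refl _
      · obtain ⟨h1, h2, h3⟩ := hgood d hd hdr
        have hadj : T.Adj d (par d) := by
          rw [hT, SimpleGraph.fromRel_adj]
          exact ⟨h2.ne, Or.inl ⟨hd, hdr, rfl, h2⟩⟩
        exact hadj.reachable.trans (ih (par d) h1 (by omega))
  have hTedge : ∀ e ∈ T.edgeSet, ∃ d ∈ D, d ≠ root ∧ c e = oc d := by
    intro e he
    obtain ⟨d, hd, hdr, rfl⟩ := hTrep e he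
    exact ⟨d, hd, hdr, hc0 d hd hdr⟩
  have hcinj : ∀ e ∈ T.edgeSet, ∀ e' ∈ T.edgeSet, c e = c e' → e = e' := by
    intro e he e' he' hcc
    obtain ⟨d, hd, hdr, rfl⟩ := hTrep e he
    obtain ⟨d', hd', hdr', rfl⟩ := hTrep e' he'
    rw [hc0 d hd hdr, hc0 d' hd' hdr'] at hcc
    rw [hocinj d hd d' hd' hcc]
  exact ⟨c, assemble G D root hroot T hTG c oc hocinj hoclast hTD
    (fun d hd => hTreach (ordF d) d hd le_rfl) hTedge hcinj f₁ f₂ hf₁ hf₂ hadj₁ hadj₂ hc1 hc2⟩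
end

section
/- Let G be a finite connected simple graph and let F ⊆ V(G) be the vertex set of a maximum induced forest of G. Then there exists a vertex set A ⊆ V(G) \ F of size at most 2|F| − 2 such that the induced subgraph G[F ∪ A] is connected. -/
open SimpleGraph

namespace ConnectorAux

variable {V : Type*} {G : SimpleGraph V}

/-- Reachability within a vertex set: there is a walk whose support stays in `s`. -/
def R (G : SimpleGraph V) (s : Set V) (x y : V) : Prop :=
  ∃ p : G.Walk x y, ∀ z ∈ p.support, z ∈ s

lemma R.refl {s : Set V} {x : V} (hx : x ∈ s) : R G s x x :=
  ⟨Walk.nil, by simp [hx]⟩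

lemma R.mono {s s' : Set V} {x y : V} (hss : s ⊆ s') (h : R G s x y) : R G s' x y := by
  obtain ⟨p, hp⟩ := h
  exact ⟨p, fun z hz => hss (hp z hz)⟩

lemma R.extend {s : Set V} {x u v : V} (h : R G s x u) (ha : G.Adj u v) (hv : v ∈ s) :
    R G s x v := by
  obtain ⟨p, hp⟩ := h
  refine ⟨p.concat ha, fun z hz => ?_⟩
  rw [Walk.support_concat] at hz
  rcases List.mem_append.mp hz with hz | hz
  · exact hp z hz
  · simp only [List.mem_singleton] at hz; subst hz; exact hv

lemma reachable_induce_of_walk {s : Set V} :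
    ∀ {x y : V} (p : G.Walk x y) (hp : ∀ z ∈ p.support, z ∈ s) (hx : x ∈ s) (hy : y ∈ s),
      (G.induce s).Reachable ⟨x, hx⟩ ⟨y, hy⟩ := by
  intro x y p
  induction p with
  | nil => intro _ hx hy; rfl
  | @cons a b c h q ih =>
    intro hp hx hy
    have hb : b ∈ s := hp b (by simp)
    have hadj : (G.induce s).Adj ⟨a, hx⟩ ⟨b, hb⟩ := h
    exact hadj.reachable.trans (ih (fun z hz => hp z (by simp [hz])) hb hy)

lemma reachable_induce_of_R {s : Set V} {x y : V} (h : R G s x y) (hx : x ∈ s) (hy : y ∈ s) :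
    (G.induce s).Reachable ⟨x, hx⟩ ⟨y, hy⟩ := by
  obtain ⟨p, hp⟩ := h
  exact reachable_induce_of_walk p hp hx hy

lemma exists_lift_walk {s : Set V} :
    ∀ {x y : V} (p : G.Walk x y) (hp : ∀ z ∈ p.support, z ∈ s) (hx : x ∈ s) (hy : y ∈ s),
      ∃ q : (G.induce s).Walk ⟨x, hx⟩ ⟨y, hy⟩,
        q.support.map Subtype.val = p.support ∧
        q.edges.map (Sym2.map Subtype.val) = p.edges := by
  intro x y p
  induction p with
  | nil => intro _ hx hy; exact ⟨Walk.nil, by simp, by simp⟩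
  | @cons a b c h q ih =>
    intro hp hx hy
    have hb : b ∈ s := hp b (by simp)
    obtain ⟨q', hq1, hq2⟩ := ih (fun z hz => hp z (by simp [hz])) hb hy
    have hadj : (G.induce s).Adj ⟨a, hx⟩ ⟨b, hb⟩ := h
    refine ⟨Walk.cons hadj q', by simp [hq1], by simp [hq2]⟩

lemma not_isAcyclic_of_cycle {s : Set V} {z : V} {p : G.Walk z z} (hp : p.IsCycle)
    (hs : ∀ w ∈ p.support, w ∈ s) : ¬ (G.induce s).IsAcyclic := by
  have hz : z ∈ s := hs z p.start_mem_support
  obtain ⟨q, hq1, hq2⟩ := exists_lift_walk p hs hz hz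
  intro hA
  refine hA q ?_
  refine ⟨⟨⟨?_⟩, ?_⟩, ?_⟩
  · -- edges nodup
    have := hp.edges_nodup
    rw [← hq2] at this
    exact this.of_map _
  · -- ne nil
    intro h
    subst h
    have : p.edges = [] := by simpa using hq2.symm
    have h3 := hp.three_le_length
    have : p.length = 0 := by
      have := congrArg List.length this
      simpa [Walk.length_edges] using this
    omega
  · -- support tail nodup
    have := hp.support_nodup
    rw [← hq1] at this
    rw [← List.map_tail] at this
    exact this.of_map _

end ConnectorAux

namespace ConnectorAux

variable {V : Type*} [Fintype V] [DecidableEq V] {G : SimpleGraph V}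

lemma exists_nbr {F : Finset V}
    (hF : (G.induce (↑F : Set V)).IsAcyclic)
    (hmax : ∀ S : Finset V, (G.induce (↑S : Set V)).IsAcyclic → S.card ≤ F.card)
    {v : V} (hv : v ∉ F) : ∃ f ∈ F, G.Adj v f := by
  by_contra hno
  push_neg at hno
  have hacyc : (G.induce (↑(insert v F) : Set V)).IsAcyclic := by
    intro z c hc
    set p : G.Walk (z : V) (z : V) := c.map (Embedding.induce (↑(insert v F) : Set V)).toHom
      with hpdef
    have hpc : p.IsCycle := hc.map (Subtype.val_injective)
    have hsupp : ∀ w ∈ p.support, w ∈ (↑(insert v F) : Set V) := by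
      intro w hw
      have hw2 : w ∈ (c.map (Embedding.induce (↑(insert v F) : Set V)).toHom).support := hw
      rw [Walk.support_map] at hw2
      obtain ⟨w', _, rfl⟩ := List.mem_map.mp hw2
      exact w'.2
    by_cases hvp : v ∈ p.support
    · -- rotate so that the cycle starts at v, its second vertex is an F-neighbor of v
      have hrot := hpc.rotate hvp
      set pr := p.rotate v hvp with hprdef
      cases hpr : pr with
      | nil => exact hrot.ne_nil (by rw [hpr])
      | @cons _ b _ hadj q =>
        have hb : b ∈ (↑(insert v F) : Set V) := by
          have hbsup : b ∈ pr.support := by rw [hpr]; simp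
          have : b ∈ p.support := by
            have := (p.support_rotate v hvp).mem_iff (a := b)
            rcases (by rw [hpr]; simp : b = v ∨ b ∈ pr.support.tail) with h1 | h1
            · subst h1; exact hvp
            · exact List.mem_of_mem_tail (this.mp h1)
          exact hsupp b this
        have hbF : b ∈ F := by
          have hbne : b ≠ v := hadj.ne'
          simp only [Finset.coe_insert, Set.mem_insert_iff] at hb
          rcases hb with h1 | h1
          · exact absurd h1 hbne
          · exact h1
        exact hno b hbF hadj
    · -- v is not on the cycle: contradiction with acyclicity of `F`
      have hsF : ∀ w ∈ p.support, w ∈ (↑F : Set V) := by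
        intro w hw
        have := hsupp w hw
        simp only [Finset.coe_insert, Set.mem_insert_iff] at this
        rcases this with h1 | h1
        · subst h1; exact absurd hw hvp
        · exact h1
      exact not_isAcyclic_of_cycle hpc hsF hF
  have := hmax (insert v F) hacyc
  rw [Finset.card_insert_of_notMem hv] at this
  omega

lemma walkMerge {F : Finset V} (hnbr : ∀ v : V, v ∉ F → ∃ f ∈ F, G.Adj v f)
    {s : Set V} (hFs : (↑F : Set V) ⊆ s) {x : V} :
    ∀ (n : ℕ) {u w : V} (p : G.Walk u w), p.length ≤ n → R G s x u → w ∈ s → ¬ R G s x w →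
      ∃ N : Finset V, N.card ≤ 2 ∧ (∀ a ∈ N, a ∉ s) ∧
        ∃ w', w' ∈ s ∧ ¬ R G s x w' ∧ R G (s ∪ ↑N) x w' := by
  intro n
  induction n with
  | zero =>
    intro u w p hl hu hw hnw
    cases p with
    | nil => exact absurd hu hnw
    | cons h q => simp [Walk.length_cons] at hl
  | succ n ih =>
    intro u w p hl hu hw hnw
    cases p with
    | nil => exact absurd hu hnw
    | @cons _ v _ h q =>
      by_cases hvs : v ∈ s
      · exact ih q (by simpa [Walk.length_cons] using hl) (hu.extend h hvs) hw hnw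
      · cases q with
        | nil => exact absurd hw hvs
        | @cons _ v2 _ h2 r =>
          by_cases hv2s : v2 ∈ s
          · by_cases hR2 : R G s x v2
            · exact ih r (by simp [Walk.length_cons] at hl ⊢; omega) hR2 hw hnw
            · refine ⟨{v}, by simp, by simpa using hvs, v2, hv2s, hR2, ?_⟩
              have h1 : R G (s ∪ ↑({v} : Finset V)) x u := hu.mono Set.subset_union_left
              have h2' : R G (s ∪ ↑({v} : Finset V)) x v := h1.extend h (by simp)
              exact h2'.extend h2 (Or.inl hv2s)
          · have hv2F : v2 ∉ F := fun hh => hv2s (hFs hh)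
            obtain ⟨f, hfF, hadj⟩ := hnbr v2 hv2F
            have hfs : f ∈ s := hFs hfF
            by_cases hRf : R G s x f
            · exact ih (Walk.cons hadj.symm r)
                (by simp [Walk.length_cons] at hl ⊢; omega) hRf hw hnw
            · refine ⟨{v, v2}, (Finset.card_insert_le _ _).trans (by simp), ?_, f, hfs, hRf, ?_⟩
              · intro a ha
                simp only [Finset.mem_insert, Finset.mem_singleton] at ha
                rcases ha with rfl | rfl
                · exact hvs
                · exact hv2s
              · have h1 : R G (s ∪ ↑({v, v2} : Finset V)) x u := hu.mono Set.subset_union_left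
                have h2' : R G (s ∪ ↑({v, v2} : Finset V)) x v := h1.extend h (by simp)
                have h3' : R G (s ∪ ↑({v, v2} : Finset V)) x v2 := h2'.extend h2 (by simp)
                exact h3'.extend hadj (Or.inl hfs)

lemma main {F : Finset V} (hnbr : ∀ v : V, v ∉ F → ∃ f ∈ F, G.Adj v f)
    (hpre : G.Preconnected) {x : V} (hxF : x ∈ F) :
    ∀ (n : ℕ) (A : Finset V), (∀ a ∈ A, a ∉ F) →
      (∀ D : Finset V, D ⊆ F → (∀ y ∈ D, ¬ R G (↑(F ∪ A) : Set V) x y) → D.card ≤ n) →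
      ∃ B : Finset V, (∀ a ∈ B, a ∉ F) ∧ B.card ≤ A.card + 2 * n ∧
        ∀ z ∈ (↑(F ∪ B) : Set V), R G (↑(F ∪ B) : Set V) x z := by
  intro n
  induction n with
  | zero =>
    intro A hAF hD
    have hallF : ∀ y ∈ F, R G (↑(F ∪ A) : Set V) x y := by
      intro y hy
      by_contra hny
      have := hD {y} (by simpa using hy) (by simpa using hny)
      simp at this
    refine ⟨A, hAF, by omega, ?_⟩
    intro z hz
    simp only [Finset.coe_union, Set.mem_union, Finset.mem_coe] at hz
    rcases hz with hz | hz
    · exact hallF z hz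
    · obtain ⟨f, hfF, hadj⟩ := hnbr z (hAF z hz)
      exact (hallF f hfF).extend hadj.symm (by simp [hz])
  | succ n ih =>
    intro A hAF hD
    by_cases hall : ∀ y ∈ F, R G (↑(F ∪ A) : Set V) x y
    · refine ⟨A, hAF, by omega, ?_⟩
      intro z hz
      simp only [Finset.coe_union, Set.mem_union, Finset.mem_coe] at hz
      rcases hz with hz | hz
      · exact hall z hz
      · obtain ⟨f, hfF, hadj⟩ := hnbr z (hAF z hz)
        exact (hall f hfF).extend hadj.symm (by simp [hz])
    · push_neg at hall
      obtain ⟨y, hyF, hny⟩ := hall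
      obtain ⟨p⟩ := hpre x y
      have hxs : x ∈ (↑(F ∪ A) : Set V) := by simp [hxF]
      have hys : y ∈ (↑(F ∪ A) : Set V) := by simp [hyF]
      have hFs : (↑F : Set V) ⊆ (↑(F ∪ A) : Set V) := by
        intro z hz; simp only [Finset.mem_coe] at hz; simp [hz]
      obtain ⟨N, hN2, hNs, w', hw's, hw'bad, hw'good⟩ :=
        walkMerge hnbr hFs p.length p le_rfl (R.refl hxs) hys hny
      -- find an F-representative of w''s new component
      obtain ⟨w'', hw''F, hw''bad, hw''good⟩ :
          ∃ w'', w'' ∈ F ∧ ¬ R G (↑(F ∪ A) : Set V) x w'' ∧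
            R G ((↑(F ∪ A) : Set V) ∪ ↑N) x w'' := by
        by_cases hw'F : w' ∈ F
        · exact ⟨w', hw'F, hw'bad, hw'good⟩
        · obtain ⟨f, hfF, hadj⟩ := hnbr w' hw'F
          refine ⟨f, hfF, ?_, hw'good.extend hadj (Or.inl (hFs hfF))⟩
          intro hRf
          exact hw'bad (hRf.extend hadj.symm hw's)
      have hcoe : (↑(F ∪ (A ∪ N)) : Set V) = (↑(F ∪ A) : Set V) ∪ ↑N := by
        simp [Finset.coe_union, Set.union_assoc]
      have hA'F : ∀ a ∈ A ∪ N, a ∉ F := by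
        intro a ha
        rcases Finset.mem_union.mp ha with ha | ha
        · exact hAF a ha
        · exact fun hh => hNs a ha (hFs hh)
      have hDle : ∀ D : Finset V, D ⊆ F →
          (∀ y₀ ∈ D, ¬ R G (↑(F ∪ (A ∪ N)) : Set V) x y₀) → D.card ≤ n := by
        intro D hDF hDbad
        rw [hcoe] at hDbad
        have hw''D : w'' ∉ D := fun hh => hDbad w'' hh hw''good
        have hins : insert w'' D ⊆ F := by
          intro a ha
          rcases Finset.mem_insert.mp ha with rfl | ha
          · exact hw''F
          · exact hDF ha
        have hinsbad : ∀ y₀ ∈ insert w'' D, ¬ R G (↑(F ∪ A) : Set V) x y₀ := by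
          intro y₀ hy₀
          rcases Finset.mem_insert.mp hy₀ with rfl | hy₀
          · exact hw''bad
          · intro hR
            exact hDbad y₀ hy₀ (hR.mono Set.subset_union_left)
        have := hD (insert w'' D) hins hinsbad
        rw [Finset.card_insert_of_notMem hw''D] at this
        omega
      obtain ⟨B, hBF, hBcard, hBreach⟩ := ih (A ∪ N) hA'F hDle
      refine ⟨B, hBF, ?_, hBreach⟩
      have := Finset.card_union_le A N
      omega

end ConnectorAux

open ConnectorAux

/-- If `F` is the vertex set of a maximum induced forest of a finite connected graph `G`, then
there is a set `A` of at most `2|F| - 2` vertices outside `F` such that `G[F ∪ A]` is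
connected. -/
theorem exists_connector_card_le {V : Type*} [Fintype V] [DecidableEq V] (G : SimpleGraph V)
    (hG : G.Connected) (F : Finset V)
    (hF : (G.induce (↑F : Set V)).IsAcyclic)
    (hmax : ∀ S : Finset V, (G.induce (↑S : Set V)).IsAcyclic → S.card ≤ F.card) :
    ∃ A : Finset V, (∀ a ∈ A, a ∉ F) ∧ A.card ≤ 2 * F.card - 2 ∧
      (G.induce (↑(F ∪ A) : Set V)).Connected := by
  classical
  obtain ⟨v0⟩ := hG.nonempty
  have h1 : 1 ≤ F.card := by
    have hsing : (G.induce (↑({v0} : Finset V) : Set V)).IsAcyclic := by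
      intro z c hc
      cases c with
      | nil => exact hc.ne_nil rfl
      | @cons _ b _ h q =>
        have hz : (z : V) = v0 := by simpa using z.2
        have hb : (b : V) = v0 := by simpa using b.2
        have : G.Adj (z : V) (b : V) := h
        rw [hz, hb] at this
        exact G.irrefl this
    simpa using hmax {v0} hsing
  obtain ⟨x, hxF⟩ := Finset.card_pos.mp (show 0 < F.card by omega)
  have hnbr : ∀ v : V, v ∉ F → ∃ f ∈ F, G.Adj v f := fun v hv => exists_nbr hF hmax hv
  have hD0 : ∀ D : Finset V, D ⊆ F →
      (∀ y₀ ∈ D, ¬ R G (↑(F ∪ (∅ : Finset V)) : Set V) x y₀) → D.card ≤ F.card - 1 := by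
    intro D hDF hDbad
    have hxD : x ∉ D := by
      intro hh
      exact hDbad x hh (R.refl (by simp [hxF]))
    have hsub : D ⊆ F.erase x := fun a ha =>
      Finset.mem_erase.mpr ⟨fun h => hxD (h ▸ ha), hDF ha⟩
    have := Finset.card_le_card hsub
    rw [Finset.card_erase_of_mem hxF] at this
    omega
  obtain ⟨B, hBF, hBcard, hBreach⟩ := main hnbr hG.preconnected hxF (F.card - 1) ∅ (by simp) hD0
  refine ⟨B, hBF, ?_, ?_⟩
  · simp only [Finset.card_empty, zero_add] at hBcard
    omega
  · have hxs : x ∈ (↑(F ∪ B) : Set V) := by simp [hxF]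
    rw [connected_iff]
    refine ⟨?_, ⟨⟨x, hxs⟩⟩⟩
    rintro ⟨a, ha⟩ ⟨b, hb⟩
    have Ra := hBreach a ha
    have Rb := hBreach b hb
    exact (reachable_induce_of_R Ra hxs ha).symm.trans (reachable_induce_of_R Rb hxs hb)
end

section
/- For every integer k ≥ 3, let G_k be the graph obtained from the complete graph K_k by attaching to each of its k vertices a new pendant vertex (a vertex of degree one adjacent only to that vertex). Then the rainbow connection number of G_k equals k. -/
open SimpleGraph

/-- The rainbow connection number: the least number of colors of an edge coloring making the
graph rainbow-connected. -/
noncomputable def rcNum {V : Type*} (G : SimpleGraph V) : ℕ :=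
  sInf {n : ℕ | ∃ c : Sym2 V → Fin n, IsRainbowConnected G c}

/-- The graph obtained from the complete graph `K_k` (on vertices `Sum.inl i`) by attaching a
pendant vertex `Sum.inr i` to each vertex `Sum.inl i`. -/
def pendantComplete (k : ℕ) : SimpleGraph (Fin k ⊕ Fin k) where
  Adj x y :=
    (∃ i j : Fin k, i ≠ j ∧ x = Sum.inl i ∧ y = Sum.inl j) ∨
    (∃ i : Fin k, x = Sum.inl i ∧ y = Sum.inr i) ∨
    (∃ i : Fin k, x = Sum.inr i ∧ y = Sum.inl i)
  symm := by
    constructor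
    rintro x y (⟨i, j, hij, rfl, rfl⟩ | ⟨i, rfl, rfl⟩ | ⟨i, rfl, rfl⟩)
    · exact Or.inl ⟨j, i, hij.symm, rfl, rfl⟩
    · exact Or.inr (Or.inr ⟨i, rfl, rfl⟩)
    · exact Or.inr (Or.inl ⟨i, rfl, rfl⟩)
  loopless := by
    constructor
    rintro x (⟨i, j, hij, rfl, h⟩ | ⟨i, rfl, h⟩ | ⟨i, rfl, h⟩)
    · exact hij (Sum.inl.inj h.symm).symm
    · exact Sum.inl_ne_inr h
    · exact Sum.inr_ne_inl h

namespace RCaux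
variable {k : ℕ}

noncomputable def pick (hk : 3 ≤ k) (i j : Fin k) : Fin k :=
  (Finset.univ \ {i, j}).min' (by
    rw [← Finset.card_pos, Finset.card_sdiff_of_subset (Finset.subset_univ _)]
    have h2 : ({i, j} : Finset (Fin k)).card ≤ 2 :=
      (Finset.card_insert_le _ _).trans (by simp)
    simp only [Finset.card_univ, Fintype.card_fin]
    omega)

lemma pick_ne_left (hk : 3 ≤ k) (i j : Fin k) : pick hk i j ≠ i := by
  have := Finset.min'_mem (Finset.univ \ ({i, j} : Finset (Fin k))) (by
    rw [← Finset.card_pos, Finset.card_sdiff_of_subset (Finset.subset_univ _)]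
    have h2 : ({i, j} : Finset (Fin k)).card ≤ 2 :=
      (Finset.card_insert_le _ _).trans (by simp)
    simp only [Finset.card_univ, Fintype.card_fin]; omega)
  rw [Finset.mem_sdiff] at this
  simp only [Finset.mem_insert, Finset.mem_singleton, not_or] at this
  exact this.2.1

lemma pick_ne_right (hk : 3 ≤ k) (i j : Fin k) : pick hk i j ≠ j := by
  have := Finset.min'_mem (Finset.univ \ ({i, j} : Finset (Fin k))) (by
    rw [← Finset.card_pos, Finset.card_sdiff_of_subset (Finset.subset_univ _)]
    have h2 : ({i, j} : Finset (Fin k)).card ≤ 2 :=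
      (Finset.card_insert_le _ _).trans (by simp)
    simp only [Finset.card_univ, Fintype.card_fin]; omega)
  rw [Finset.mem_sdiff] at this
  simp only [Finset.mem_insert, Finset.mem_singleton, not_or] at this
  exact this.2.2

lemma pick_comm (hk : 3 ≤ k) (i j : Fin k) : pick hk i j = pick hk j i := by
  simp only [pick, Finset.pair_comm i j]

lemma adj_ll {i j : Fin k} (h : i ≠ j) : (pendantComplete k).Adj (Sum.inl i) (Sum.inl j) :=
  Or.inl ⟨i, j, h, rfl, rfl⟩
lemma adj_lr (i : Fin k) : (pendantComplete k).Adj (Sum.inl i) (Sum.inr i) :=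
  Or.inr (Or.inl ⟨i, rfl, rfl⟩)
lemma adj_rl (i : Fin k) : (pendantComplete k).Adj (Sum.inr i) (Sum.inl i) :=
  Or.inr (Or.inr ⟨i, rfl, rfl⟩)

lemma pendant_edge_mem {i : Fin k} {v} (p : (pendantComplete k).Walk (Sum.inr i) v)
    (hv : (Sum.inr i : Fin k ⊕ Fin k) ≠ v) : s(Sum.inr i, Sum.inl i) ∈ p.edges := by
  cases p with
  | nil => exact absurd rfl hv
  | @cons _ w _ h q =>
    rcases h with (⟨a, b, hab, h1, h2⟩ | ⟨a, h1, h2⟩ | ⟨a, h1, h2⟩)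
    · exact absurd h1 (by simp)
    · exact absurd h1 (by simp)
    · obtain rfl : a = i := by simpa using h1.symm
      subst h2
      exact List.mem_cons.mpr (Or.inl rfl)

noncomputable def col (hk : 3 ≤ k) : Sym2 (Fin k ⊕ Fin k) → Fin k :=
  Sym2.lift ⟨fun x y =>
    match x, y with
    | Sum.inl i, Sum.inl j => pick hk i j
    | Sum.inl _, Sum.inr j => j
    | Sum.inr i, Sum.inl _ => i
    | Sum.inr i, Sum.inr j => pick hk i j,
  by
    rintro (i | i) (j | j) <;> simp [pick_comm hk i j]⟩

@[simp] lemma col_ll (hk : 3 ≤ k) (i j : Fin k) :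
    col hk s(Sum.inl i, Sum.inl j) = pick hk i j := rfl
@[simp] lemma col_lr (hk : 3 ≤ k) (i j : Fin k) :
    col hk s(Sum.inl i, Sum.inr j) = j := rfl
@[simp] lemma col_rl (hk : 3 ≤ k) (i j : Fin k) :
    col hk s(Sum.inr i, Sum.inl j) = i := rfl

lemma col_rc (hk : 3 ≤ k) : IsRainbowConnected (pendantComplete k) (col hk) := by
  have flip : ∀ {u v : Fin k ⊕ Fin k},
      (∃ p : (pendantComplete k).Walk u v, p.IsPath ∧ (p.edges.map (col hk)).Nodup) →
      (∃ p : (pendantComplete k).Walk v u, p.IsPath ∧ (p.edges.map (col hk)).Nodup) := by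
    rintro u v ⟨p, hp, hn⟩
    exact ⟨p.reverse, hp.reverse, by
      rw [SimpleGraph.Walk.edges_reverse, List.map_reverse]
      exact List.nodup_reverse.mpr hn⟩
  have caseLL : ∀ i j : Fin k,
      ∃ p : (pendantComplete k).Walk (Sum.inl i) (Sum.inl j),
        p.IsPath ∧ (p.edges.map (col hk)).Nodup := by
    intro i j
    by_cases hij : i = j
    · subst hij; exact ⟨.nil, by simp, by simp⟩
    · exact ⟨.cons (adj_ll hij) .nil, by simp [SimpleGraph.Walk.isPath_def, hij], by simp⟩
  have caseLR : ∀ i j : Fin k,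
      ∃ p : (pendantComplete k).Walk (Sum.inl i) (Sum.inr j),
        p.IsPath ∧ (p.edges.map (col hk)).Nodup := by
    intro i j
    by_cases hij : i = j
    · subst hij; exact ⟨.cons (adj_lr i) .nil, by simp [SimpleGraph.Walk.isPath_def], by simp⟩
    · refine ⟨.cons (adj_ll hij) (.cons (adj_lr j) .nil), ?_, ?_⟩
      · simp [SimpleGraph.Walk.isPath_def, hij]
      · simp [pick_ne_right hk i j]
  rintro (i | i) (j | j)
  · exact caseLL i j
  · exact caseLR i j
  · exact flip (caseLR j i)
  · by_cases hij : i = j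
    · subst hij; exact ⟨.nil, by simp, by simp⟩
    · refine ⟨.cons (adj_rl i) (.cons (adj_ll hij) (.cons (adj_lr j) .nil)), ?_, ?_⟩
      · simp [SimpleGraph.Walk.isPath_def, hij]
      · simp [hij, pick_ne_left hk i j, pick_ne_right hk i j,
          (pick_ne_left hk i j).symm, (pick_ne_right hk i j).symm]

end RCaux

/-- For every `k ≥ 3`, the rainbow connection number of the complete graph `K_k` with a pendant
vertex attached to each of its vertices is exactly `k`. -/
theorem rcNum_pendantComplete (k : ℕ) (hk : 3 ≤ k) :
    rcNum (pendantComplete k) = k := by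
  have hmem : k ∈ {n : ℕ | ∃ c : Sym2 (Fin k ⊕ Fin k) → Fin n,
      IsRainbowConnected (pendantComplete k) c} := ⟨RCaux.col hk, RCaux.col_rc hk⟩
  refine le_antisymm (Nat.sInf_le hmem) (le_csInf ⟨k, hmem⟩ ?_)
  rintro n ⟨c, hc⟩
  -- the map i ↦ color of the pendant edge at i is injective
  have hinj : Function.Injective (fun i : Fin k => c s(Sum.inr i, Sum.inl i)) := by
    intro i j hij
    by_contra hne
    obtain ⟨p, hp, hn⟩ := hc (Sum.inr i) (Sum.inr j)
    have hij' : (Sum.inr i : Fin k ⊕ Fin k) ≠ Sum.inr j := by simp [hne]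
    have hei : s(Sum.inr i, Sum.inl i) ∈ p.edges := RCaux.pendant_edge_mem p hij'
    have hej : s(Sum.inr j, Sum.inl j) ∈ p.edges := by
      have := RCaux.pendant_edge_mem p.reverse (Ne.symm hij')
      rwa [SimpleGraph.Walk.edges_reverse, List.mem_reverse] at this
    have hne2 : s((Sum.inr i : Fin k ⊕ Fin k), Sum.inl i) ≠ s(Sum.inr j, Sum.inl j) := by
      simp [Sym2.eq_iff, hne]
    exact hne2 (List.inj_on_of_nodup_map hn hei hej hij)
  simpa using Fintype.card_le_of_injective _ hinj
end
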